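/- Let V be a real inner product space, let S be a subspace of V, and let v ∈ V and p ∈ S be such that ⟨v − p, w⟩ = 0 for all w ∈ S (i.e., p is the orthogonal projection of v onto S). Let u₁, …, u_k ∈ V and s₁, …, s_k ∈ S, and let β₁, …, β_k ∈ ℝ satisfy β₁² + ⋯ + β_k² = 1. If v = β₁ u₁ + ⋯ + β_k u_k, then ‖v − p‖² ≤ Σ_{j=1}^{k} ‖u_j − s_j‖². -/

import Mathlib

theorem stmt_4 {V : Type*} [NormedAddCommGroup V] [InnerProductSpace ℝ V]
    (S : Submodule ℝ V) (v p : V) (hp : p ∈ S)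
    (hproj : ∀ w ∈ S, inner ℝ (v - p) w = (0 : ℝ))
    (k : ℕ) (u : Fin k → V) (s : Fin k → V) (hs : ∀ j, s j ∈ S)
    (β : Fin k → ℝ) (hβ : ∑ j, β j ^ 2 = 1)
    (hv : v = ∑ j, β j • u j) :
    ‖v - p‖ ^ 2 ≤ ∑ j, ‖u j - s j‖ ^ 2 := by
  set q : V := ∑ j, β j • s j with hq
  have hqS : q ∈ S := Submodule.sum_mem S fun j _ => Submodule.smul_mem S _ (hs j)
  have horth : inner ℝ (v - p) (p - q) = (0 : ℝ) :=
    hproj _ (Submodule.sub_mem S hp hqS)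
  have hpyth : ‖v - p‖ ^ 2 ≤ ‖v - q‖ ^ 2 := by
    have h : ‖v - q‖ ^ 2 = ‖v - p‖ ^ 2 + ‖p - q‖ ^ 2 := by
      have := norm_add_sq_real (v - p) (p - q)
      rw [horth] at this
      simpa [sub_add_sub_cancel] using this
    nlinarith [sq_nonneg ‖p - q‖]
  have htri : ‖v - q‖ ≤ ∑ j, |β j| * ‖u j - s j‖ := by
    have h : v - q = ∑ j, β j • (u j - s j) := by
      rw [hv, hq, ← Finset.sum_sub_distrib]
      simp [smul_sub]
    rw [h]
    calc ‖∑ j, β j • (u j - s j)‖ ≤ ∑ j, ‖β j • (u j - s j)‖ := norm_sum_le _ _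
      _ = ∑ j, |β j| * ‖u j - s j‖ := by simp [norm_smul, Real.norm_eq_abs]
  have hcs : (∑ j, |β j| * ‖u j - s j‖) ^ 2 ≤
      (∑ j, |β j| ^ 2) * ∑ j, ‖u j - s j‖ ^ 2 :=
    Finset.sum_mul_sq_le_sq_mul_sq _ _ _
  have hβ' : (∑ j, |β j| ^ 2) = 1 := by simpa [sq_abs] using hβ
  have h1 : ‖v - q‖ ^ 2 ≤ ∑ j, ‖u j - s j‖ ^ 2 := by
    have hnn : (0:ℝ) ≤ ∑ j, |β j| * ‖u j - s j‖ :=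
      Finset.sum_nonneg fun j _ => mul_nonneg (abs_nonneg _) (norm_nonneg _)
    calc ‖v - q‖ ^ 2 ≤ (∑ j, |β j| * ‖u j - s j‖) ^ 2 :=
          pow_le_pow_left₀ (norm_nonneg _) htri 2
      _ ≤ _ := by rw [hβ'] at hcs; simpa using hcs
  linarith
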